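/- Let m : Finset(Fin n) → ℝ_{>0} and 0 ≤ P ≤ n. Then Σ_{p=P+1}^n (1/C(n,p)) Σ_{|T|=p} (1/p) Σ_{j∈T} [log m(T^c ∪ {j}) − log m(T^c)] = (1/C(n,P)) Σ_{|T|=P} log m(T^c) − log m(∅). -/

import Mathlib

open Finset

lemma double_sum (n P : ℕ) (h : Finset (Fin n) → ℝ) :
    ∑ T ∈ (univ : Finset (Fin n)).powersetCard (P+1), ∑ j ∈ T, h (T.erase j)
    = ((n - P : ℕ) : ℝ) * ∑ S ∈ (univ : Finset (Fin n)).powersetCard P, h S := by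
  have h2 : ∑ S ∈ (univ : Finset (Fin n)).powersetCard P, ∑ _j ∈ Sᶜ, h S
      = ((n - P : ℕ) : ℝ) * ∑ S ∈ (univ : Finset (Fin n)).powersetCard P, h S := by
    rw [Finset.mul_sum]
    refine Finset.sum_congr rfl fun S hS => ?_
    rw [Finset.sum_const, Finset.card_compl, (Finset.mem_powersetCard.mp hS).2]
    simp
  rw [← h2, Finset.sum_sigma', Finset.sum_sigma']
  refine Finset.sum_nbij' (fun x => ⟨x.1.erase x.2, x.2⟩) (fun x => ⟨insert x.2 x.1, x.2⟩)
    ?_ ?_ ?_ ?_ ?_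
  · rintro ⟨T, j⟩ hx
    simp only [Finset.mem_sigma, Finset.mem_powersetCard_univ] at hx ⊢
    obtain ⟨hc, hj⟩ := hx
    constructor
    · rw [Finset.card_erase_of_mem hj, hc]; rfl
    · simp [hj]
  · rintro ⟨S, j⟩ hx
    simp only [Finset.mem_sigma, Finset.mem_powersetCard_univ, Finset.mem_compl] at hx ⊢
    obtain ⟨hc, hj⟩ := hx
    exact ⟨by rw [Finset.card_insert_of_notMem hj, hc], Finset.mem_insert_self _ _⟩
  · rintro ⟨T, j⟩ hx
    simp only [Finset.mem_sigma, Finset.mem_powersetCard_univ] at hx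
    simp [Finset.insert_erase hx.2]
  · rintro ⟨S, j⟩ hx
    simp only [Finset.mem_sigma, Finset.mem_powersetCard_univ, Finset.mem_compl] at hx
    simp [Finset.erase_insert hx.2]
  · rintro ⟨T, j⟩ hx
    rfl

lemma step (n P : ℕ) (hP : P < n) (m : Finset (Fin n) → ℝ) :
    ((n.choose (P+1) : ℝ))⁻¹ * ∑ T ∈ (univ : Finset (Fin n)).powersetCard (P+1),
        (((P+1 : ℕ)) : ℝ)⁻¹ * ∑ j ∈ T, (Real.log (m (Tᶜ ∪ {j})) - Real.log (m Tᶜ))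
      + ((n.choose (P+1) : ℝ))⁻¹ *
        ∑ T ∈ (univ : Finset (Fin n)).powersetCard (P+1), Real.log (m Tᶜ)
    = ((n.choose P : ℝ))⁻¹ *
        ∑ T ∈ (univ : Finset (Fin n)).powersetCard P, Real.log (m Tᶜ) := by
  have hrw : ∀ T ∈ (univ : Finset (Fin n)).powersetCard (P+1),
      (((P+1 : ℕ)) : ℝ)⁻¹ * ∑ j ∈ T, (Real.log (m (Tᶜ ∪ {j})) - Real.log (m Tᶜ))
      = (((P+1 : ℕ)) : ℝ)⁻¹ * (∑ j ∈ T, Real.log (m ((T.erase j)ᶜ))) - Real.log (m Tᶜ) := by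
    intro T hT
    have hcard := (Finset.mem_powersetCard.mp hT).2
    rw [Finset.sum_sub_distrib, Finset.sum_const, hcard, mul_sub]
    congr 1
    · congr 1
      refine Finset.sum_congr rfl fun j hj => ?_
      rw [Finset.compl_erase, Finset.insert_eq, Finset.union_comm]
    · rw [nsmul_eq_mul, ← mul_assoc, inv_mul_cancel₀ (by positivity), one_mul]
  rw [Finset.sum_congr rfl hrw, Finset.sum_sub_distrib, ← Finset.mul_sum]
  have hd2 := double_sum n P (fun S => Real.log (m Sᶜ))
  rw [hd2, mul_sub]
  have hkey : (n.choose (P+1) : ℝ) * (P+1 : ℕ) = (n.choose P : ℝ) * ((n - P : ℕ)) := by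
    rw [← Nat.cast_mul, ← Nat.cast_mul, Nat.choose_succ_right_eq]
  have h1 : (0:ℝ) < n.choose (P+1) := by exact_mod_cast Nat.choose_pos hP
  have h2 : (0:ℝ) < n.choose P := by exact_mod_cast Nat.choose_pos hP.le
  have h3 : (0:ℝ) < ((n - P : ℕ):ℝ) := by
    have : 0 < n - P := Nat.sub_pos_of_lt hP
    exact_mod_cast this
  have h4 : (0:ℝ) < ((P+1 : ℕ):ℝ) := by positivity
  have hco : ((n.choose (P+1) : ℝ))⁻¹ * (((P+1:ℕ)):ℝ)⁻¹ * ((n - P : ℕ) : ℝ)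
      = ((n.choose P : ℝ))⁻¹ := by
    push_cast at hkey ⊢
    field_simp
    linarith [hkey]
  linear_combination (∑ S ∈ (univ : Finset (Fin n)).powersetCard P, Real.log (m Sᶜ)) * hco

theorem stmt11 (n : ℕ) (m : Finset (Fin n) → ℝ) (hpos : ∀ S, 0 < m S)
    (P : ℕ) (hP : P ≤ n) :
    ∑ p ∈ Finset.Icc (P + 1) n, ((n.choose p : ℝ))⁻¹ *
      ∑ T ∈ (Finset.univ : Finset (Fin n)).powersetCard p, (p : ℝ)⁻¹ *
        ∑ j ∈ T, (Real.log (m (Tᶜ ∪ {j})) - Real.log (m Tᶜ)) =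
    ((n.choose P : ℝ))⁻¹ *
      ∑ T ∈ (Finset.univ : Finset (Fin n)).powersetCard P, Real.log (m Tᶜ) -
    Real.log (m ∅) := by
  induction' hd : n - P with d ih generalizing P
  · have hPn : P = n := le_antisymm hP (Nat.sub_eq_zero_iff_le.mp hd)
    rw [Finset.Icc_eq_empty (by omega), Finset.sum_empty, hPn]
    rw [show Finset.powersetCard n (univ : Finset (Fin n)) = {univ} from by
      simpa using Finset.powersetCard_self (univ : Finset (Fin n))]
    rw [Finset.sum_singleton, Finset.compl_univ, Nat.choose_self]
    simp
  · have hPn : P < n := by omega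
    have hsplit : Finset.Icc (P + 1) n = insert (P+1) (Finset.Icc (P + 2) n) := by
      ext x
      simp only [Finset.mem_Icc, Finset.mem_insert]
      omega
    rw [hsplit, Finset.sum_insert (by simp)]
    rw [ih (P+1) hPn (by omega)]
    linear_combination step n P hPn m
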